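/- Let k, m, n be natural numbers. Let M be a complex positive semidefinite matrix of size (k·m + n)×(k·m + n) of block form M = fromBlocks (blockDiagonal D) C (Cᴴ) M_b, where D : Fin k → Matrix (Fin m) (Fin m) ℂ is a family of m×m blocks, C is (k·m)×n, and M_b is n×n. Then there exist a family R_a : Fin k → Matrix (Fin m) (Fin m) ℂ, a (k·m)×n matrix R_ab, and an n×n matrix R_b such that, setting R = fromBlocks (blockDiagonal R_a) R_ab 0 R_b, one has M = Rᴴ ⬝ R. (This is the matrix-theoretic core of the theorem that every NPA level-1 sum-of-squares certificate can be converted into a 'nice' one: a PSD moment matrix whose top-left corner is block diagonal admits a Gram factorization R with zero lower-left block and block-diagonal top-left block.) -/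

import Mathlib

open Matrix
open scoped ComplexOrder

/-- Pseudoinverse-style matrices for a Hermitian matrix. -/
lemma exists_pseudo {ι : Type*} [Fintype ι] [DecidableEq ι] {L : Matrix ι ι ℂ}
    (hL : L.IsHermitian) :
    ∃ P Q : Matrix ι ι ℂ, Pᴴ = P ∧ Qᴴ = Q ∧ L * P = Q ∧ L * Q = L ∧ P * Q = P ∧ Q * Q = Q := by
  set V : Matrix ι ι ℂ := (hL.eigenvectorUnitary : Matrix ι ι ℂ) with hVdef
  have hVV : Vᴴ * V = 1 := by
    simpa [Matrix.star_eq_conjTranspose] using Unitary.coe_star_mul_self hL.eigenvectorUnitary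
  have key : ∀ f g : ι → ℂ,
      (V * diagonal f * Vᴴ) * (V * diagonal g * Vᴴ) = V * diagonal (f * g) * Vᴴ := by
    intro f g
    simp only [Matrix.mul_assoc]
    rw [← Matrix.mul_assoc Vᴴ V, hVV, Matrix.one_mul,
      ← Matrix.mul_assoc (diagonal f) (diagonal g), diagonal_mul_diagonal]
    rfl
  have hconj : ∀ f : ι → ℂ, (V * diagonal f * Vᴴ)ᴴ = V * diagonal (star f) * Vᴴ := by
    intro f
    simp [Matrix.conjTranspose_mul, Matrix.diagonal_conjTranspose, Matrix.mul_assoc]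
  set d := hL.eigenvalues with hd
  have hLspec : L = V * diagonal (fun i => (d i : ℂ)) * Vᴴ := by
    have := hL.spectral_theorem
    simp [Matrix.star_eq_conjTranspose, Function.comp] at this; exact this
  set p : ι → ℂ := fun i => if d i = 0 then 0 else ((d i : ℂ))⁻¹ with hp
  set q : ι → ℂ := fun i => if d i = 0 then 0 else 1 with hq
  have hsp : star p = p := by
    funext i
    simp only [hp, Pi.star_apply]
    split_ifs with h <;> simp
  have hsq : star q = q := by
    funext i
    simp only [hq, Pi.star_apply]
    split_ifs with h <;> simp
  have hdp : (fun i => (d i : ℂ)) * p = q := by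
    funext i
    simp only [hp, hq, Pi.mul_apply, mul_ite, mul_zero]
    split_ifs with h
    · rfl
    · exact mul_inv_cancel₀ (by exact_mod_cast h)
  have hdq : (fun i => (d i : ℂ)) * q = fun i => (d i : ℂ) := by
    funext i
    simp only [hq, Pi.mul_apply, mul_ite, mul_zero, mul_one]
    split_ifs with h <;> simp [h]
  have hpq : p * q = p := by
    funext i
    simp only [hp, hq, Pi.mul_apply, mul_ite, mul_zero, mul_one]
    split_ifs with h <;> simp [h]
  have hqq : q * q = q := by
    funext i
    simp only [hq, Pi.mul_apply, mul_ite, mul_zero, mul_one]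
    split_ifs with h <;> simp [h]
  refine ⟨V * diagonal p * Vᴴ, V * diagonal q * Vᴴ, ?_, ?_, ?_, ?_, ?_, ?_⟩
  · rw [hconj, hsp]
  · rw [hconj, hsq]
  · rw [hLspec, key, hdp]
  · rw [hLspec, key, hdq]
  · rw [key, hpq]
  · rw [key, hqq]

lemma posSemidef_iff_eq_transpose_mul_self {n : Type*} [Fintype n] [DecidableEq n]
    {A : Matrix n n ℂ} : A.PosSemidef ↔ ∃ B : Matrix n n ℂ, A = Bᴴ * B := by
  open scoped MatrixOrder in
  exact ⟨fun h => by simpa [star_eq_conjTranspose] using CStarAlgebra.nonneg_iff_eq_star_mul_self.mp h.nonneg,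
    fun ⟨B, hB⟩ => hB ▸ posSemidef_conjTranspose_mul_self B⟩

/-- A positive semidefinite matrix whose top-left corner is block diagonal admits a
Gram factorization with zero lower-left block and block-diagonal top-left block. -/
theorem nice_cholesky_of_blockDiagonal_corner (k m n : ℕ)
    (D : Fin k → Matrix (Fin m) (Fin m) ℂ)
    (C : Matrix (Fin m × Fin k) (Fin n) ℂ)
    (M_b : Matrix (Fin n) (Fin n) ℂ)
    (hM : (Matrix.fromBlocks (Matrix.blockDiagonal D) C Cᴴ M_b).PosSemidef) :
    ∃ (R_a : Fin k → Matrix (Fin m) (Fin m) ℂ)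
      (R_ab : Matrix (Fin m × Fin k) (Fin n) ℂ)
      (R_b : Matrix (Fin n) (Fin n) ℂ),
      Matrix.fromBlocks (Matrix.blockDiagonal D) C Cᴴ M_b =
        (Matrix.fromBlocks (Matrix.blockDiagonal R_a) R_ab 0 R_b)ᴴ *
          (Matrix.fromBlocks (Matrix.blockDiagonal R_a) R_ab 0 R_b) := by
  classical
  obtain ⟨B, hB⟩ := posSemidef_iff_eq_transpose_mul_self.mp hM
  set B₁ := B.submatrix id Sum.inl with hB₁def
  set B₂ := B.submatrix id Sum.inr with hB₂def
  have hA : Matrix.blockDiagonal D = B₁ᴴ * B₁ := by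
    ext i j
    have h := congrFun (congrFun hB (Sum.inl i)) (Sum.inl j)
    simpa [hB₁def, hB₂def, Matrix.mul_apply, Matrix.conjTranspose_apply, Matrix.submatrix_apply] using h
  have hC : C = B₁ᴴ * B₂ := by
    ext i j
    have h := congrFun (congrFun hB (Sum.inl i)) (Sum.inr j)
    simpa [hB₁def, hB₂def, Matrix.mul_apply, Matrix.conjTranspose_apply, Matrix.submatrix_apply] using h
  have hMb : M_b = B₂ᴴ * B₂ := by
    ext i j
    have h := congrFun (congrFun hB (Sum.inr i)) (Sum.inr j)
    simpa [hB₁def, hB₂def, Matrix.mul_apply, Matrix.conjTranspose_apply, Matrix.submatrix_apply] using h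
  clear_value B₁ B₂
  clear hB hB₁def hB₂def
  have hD : ∀ i, (D i).PosSemidef := by
    intro i
    have hbd : (Matrix.blockDiagonal D).PosSemidef := hA ▸ posSemidef_conjTranspose_mul_self B₁
    have heq : (Matrix.blockDiagonal D).submatrix (fun j : Fin m => (j, i))
        (fun j : Fin m => (j, i)) = D i := by
      ext a b
      simp [Matrix.blockDiagonal_apply]
    exact heq ▸ hbd.submatrix _
  open scoped MatrixOrder in
  set R_a : Fin k → Matrix (Fin m) (Fin m) ℂ := fun i => CFC.sqrt (D i) with hRa
  set L := Matrix.blockDiagonal R_a with hLdef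
  have hsqH : (fun i => (R_a i)ᴴ) = R_a := by
    funext i; open scoped MatrixOrder in exact (CFC.sqrt_nonneg (D i)).posSemidef.1
  have hLH : L.IsHermitian := by
    rw [Matrix.IsHermitian, hLdef, Matrix.blockDiagonal_conjTranspose, hsqH]
  have hsqM : (fun i => R_a i * R_a i) = D := by
    funext i; open scoped MatrixOrder in exact CFC.sqrt_mul_sqrt_self (D i) (hD i).nonneg
  have hLL : L * L = Matrix.blockDiagonal D := by
    rw [hLdef, ← Matrix.blockDiagonal_mul, hsqM]
  obtain ⟨P, Q, hPH, hQH, hLP, hLQ, hPQ, hQQ⟩ := exists_pseudo hLH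
  have hG : B₁ᴴ * B₁ = L * L := hA.symm.trans hLL.symm
  have hQL : Q * L = L := by
    have := congrArg Matrix.conjTranspose hLQ
    rwa [Matrix.conjTranspose_mul, hQH, hLH.eq] at this
  have hPL : P * L = Q := by
    have := congrArg Matrix.conjTranspose hLP
    rwa [Matrix.conjTranspose_mul, hPH, hLH.eq, hQH] at this
  have hQB1 : Q * B₁ᴴ = B₁ᴴ := by
    have e1 : Q * (L * L) = L * L := by rw [← Matrix.mul_assoc, hQL]
    have e2 : L * L * Q = L * L := by rw [Matrix.mul_assoc, hLQ]
    have e3 : Q * (L * L) * Q = L * L := by rw [e1, e2]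
    have hz : (Q * B₁ᴴ - B₁ᴴ) * (Q * B₁ᴴ - B₁ᴴ)ᴴ = 0 := by
      have f1 : Q * B₁ᴴ * (B₁ * Qᴴ) = L * L := by
        rw [hQH, Matrix.mul_assoc, ← Matrix.mul_assoc B₁ᴴ B₁ Q, hG, e2, e1]
      have f2 : Q * B₁ᴴ * B₁ = L * L := by
        rw [Matrix.mul_assoc, hG, e1]
      have f3 : B₁ᴴ * (B₁ * Qᴴ) = L * L := by
        rw [hQH, ← Matrix.mul_assoc, hG, e2]
      simp only [Matrix.conjTranspose_sub, Matrix.conjTranspose_mul,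
        Matrix.conjTranspose_conjTranspose, Matrix.sub_mul, Matrix.mul_sub, f1, f2, f3, hG]
      abel
    exact sub_eq_zero.mp (self_mul_conjTranspose_eq_zero.mp hz)
  have hQC : Q * C = C := by rw [hC, ← Matrix.mul_assoc, hQB1]
  set R_ab := P * C with hRabdef
  clear_value R_ab
  have hLRab : L * R_ab = C := by rw [hRabdef, ← Matrix.mul_assoc, hLP, hQC]
  set W := B₁ * P with hWdef
  clear_value W
  have hWH : Wᴴ = P * B₁ᴴ := by rw [hWdef, Matrix.conjTranspose_mul, hPH]
  have hWHW : Wᴴ * W = Q := by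
    rw [hWH, hWdef, Matrix.mul_assoc, ← Matrix.mul_assoc B₁ᴴ B₁ P, hG,
      ← Matrix.mul_assoc, ← Matrix.mul_assoc, hPL, Matrix.mul_assoc, hLP, hQQ]
  have hWQ : W * Q = W := by rw [hWdef, Matrix.mul_assoc, hPQ]
  set E := W * Wᴴ with hEdef
  clear_value E
  have hEH : Eᴴ = E := by rw [hEdef, Matrix.conjTranspose_mul, Matrix.conjTranspose_conjTranspose]
  have hEE : E * E = E := by
    rw [hEdef, Matrix.mul_assoc, ← Matrix.mul_assoc Wᴴ W Wᴴ, hWHW, ← Matrix.mul_assoc, hWQ]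
  have hRab2 : R_ab = Wᴴ * B₂ := by rw [hRabdef, hWH, hC, Matrix.mul_assoc]
  have h1E : (1 - E) * (1 - E) = 1 - E := by
    simp only [Matrix.mul_sub, Matrix.sub_mul, Matrix.one_mul, Matrix.mul_one, hEE]
    abel
  have hN : M_b - R_abᴴ * R_ab = ((1 - E) * B₂)ᴴ * ((1 - E) * B₂) := by
    have h1EH : (1 - E)ᴴ = 1 - E := by
      rw [Matrix.conjTranspose_sub, Matrix.conjTranspose_one, hEH]
    rw [Matrix.conjTranspose_mul, h1EH, Matrix.mul_assoc,
      ← Matrix.mul_assoc (1 - E) (1 - E) B₂, h1E,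
      Matrix.sub_mul, Matrix.mul_sub, Matrix.one_mul, hMb, hRab2,
      Matrix.conjTranspose_mul, Matrix.conjTranspose_conjTranspose]
    rw [hEdef, Matrix.mul_assoc, Matrix.mul_assoc]
  have hNPS : (M_b - R_abᴴ * R_ab).PosSemidef := hN ▸ posSemidef_conjTranspose_mul_self _
  obtain ⟨R_b, hRb⟩ := posSemidef_iff_eq_transpose_mul_self.mp hNPS
  have hBL : R_abᴴ * L = Cᴴ := by
    rw [← hLRab, Matrix.conjTranspose_mul, hLH.eq]
  have hBR : R_abᴴ * R_ab + R_bᴴ * R_b = M_b := by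
    rw [← hRb]; abel
  refine ⟨R_a, R_ab, R_b, ?_⟩
  rw [← hLdef, Matrix.fromBlocks_conjTranspose, Matrix.fromBlocks_multiply]
  simp only [Matrix.conjTranspose_zero, Matrix.zero_mul, Matrix.mul_zero, add_zero, zero_add]
  rw [hLH.eq, hLL, hLRab, hBL, hBR]
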